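/- For every ε with 0 < ε < 1/4 and every L_max > ε', where ε' = √3·α₀·ε^{3/2}/(1−ε)^{1/2}, there exists a function S̃ defined on the region R = (0,1)×[0,L_max] \ (1−ε,1)×[0,ε'] that takes only finitely many values (a piecewise constant function) and such that for every (g,L) ∈ R, the value S̃(g,L) is an approximate zero of f_{g,L}. -/

import Mathlib

noncomputable section

/-- The hyperbolic Kepler function `f_{g,L}(S) = S - g·arcsinh(S) - L`. -/
def fhk (g L : ℝ) : ℝ → ℝ := fun S => S - g * Real.arsinh S - L

/-- `β(f,z) = |f(z)/f'(z)|`. -/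
def betaFn (f : ℝ → ℝ) (z : ℝ) : ℝ := |f z / deriv f z|

/-- `γ(f,z) = sup_{k ≥ 2} |f^{(k)}(z)/(k!·f'(z))|^{1/(k-1)}`. -/
def gammaFn (f : ℝ → ℝ) (z : ℝ) : ℝ :=
  sSup {y : ℝ | ∃ k : ℕ, 2 ≤ k ∧
    y = |iteratedDeriv k f z / (Nat.factorial k * deriv f z)| ^ ((1 : ℝ) / ((k : ℝ) - 1))}

/-- `α(f,z) = β(f,z)·γ(f,z)`. -/
def alphaFn (f : ℝ → ℝ) (z : ℝ) : ℝ := betaFn f z * gammaFn f z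

/-- Smale's constant (improved by Wang–Han): `α₀ = 3 - 2√2`. -/
def alpha0 : ℝ := 3 - 2 * Real.sqrt 2

/-- `z` is an approximate zero of `f` when `α(f,z) < α₀`. -/
def ApproxZero (f : ℝ → ℝ) (z : ℝ) : Prop := alphaFn f z < alpha0

def hkU : ℕ → ℝ → ℝ
  | 0 => fun x => (Real.sqrt (1 + x ^ 2))⁻¹
  | 1 => fun x => -x * ((Real.sqrt (1 + x ^ 2))⁻¹) ^ 3
  | (n + 2) => fun x =>
      (-(2 * (n : ℝ) + 3) * x * hkU (n + 1) x - ((n : ℝ) + 1) ^ 2 * hkU n x) / (1 + x ^ 2)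

lemma hkU_two (n : ℕ) (x : ℝ) : hkU (n + 2) x =
    (-(2 * (n : ℝ) + 3) * x * hkU (n + 1) x - ((n : ℝ) + 1) ^ 2 * hkU n x) / (1 + x ^ 2) := rfl

lemma one_add_sq_pos (x : ℝ) : (0:ℝ) < 1 + x ^ 2 := by positivity

lemma hkU_deriv : ∀ n : ℕ, ∀ x : ℝ, HasDerivAt (hkU n) (hkU (n + 1) x) x := by
  have base0 : ∀ x : ℝ, HasDerivAt (hkU 0) (hkU 1 x) x := by
    intro x
    have hpos := one_add_sq_pos x
    have hs : Real.sqrt (1 + x ^ 2) ≠ 0 := by positivity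
    have h1 : HasDerivAt (fun x : ℝ => 1 + x ^ 2) (2 * x) x := by
      simpa using ((hasDerivAt_pow 2 x).const_add 1)
    have h2 : HasDerivAt (fun x : ℝ => Real.sqrt (1 + x ^ 2))
        (1 / (2 * Real.sqrt (1 + x ^ 2)) * (2 * x)) x :=
      (Real.hasDerivAt_sqrt hpos.ne').comp x h1
    have h3 : HasDerivAt (fun x : ℝ => (Real.sqrt (1 + x ^ 2))⁻¹) _ x := h2.fun_inv hs
    refine h3.congr_deriv (Eq.symm ?_)
    show hkU 1 x = _
    simp only [hkU]
    have hsq : Real.sqrt (1 + x ^ 2) ^ 2 = 1 + x ^ 2 := Real.sq_sqrt hpos.le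
    set s := Real.sqrt (1 + x ^ 2) with hsdef
    field_simp
  have base1 : ∀ x : ℝ, HasDerivAt (hkU 1) (hkU 2 x) x := by
    intro x
    have hpos := one_add_sq_pos x
    have hs : Real.sqrt (1 + x ^ 2) ≠ 0 := by positivity
    have h4 : HasDerivAt (fun x : ℝ => (hkU 0 x) ^ 3) (3 * (hkU 0 x) ^ 2 * hkU 1 x) x := by
      simpa [mul_comm] using (base0 x).fun_pow 3
    have h5 : HasDerivAt (fun x : ℝ => -x * (hkU 0 x) ^ 3)
        (-1 * (hkU 0 x) ^ 3 + -x * (3 * (hkU 0 x) ^ 2 * hkU 1 x)) x :=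
      ((hasDerivAt_id x).neg).mul h4
    have heq : (fun x : ℝ => -x * (hkU 0 x) ^ 3) = hkU 1 := by
      funext y; simp [hkU]
    rw [heq] at h5
    convert h5 using 1
    show hkU 2 x = _
    rw [hkU_two]
    simp only [hkU]
    have hsq : Real.sqrt (1 + x ^ 2) ^ 2 = 1 + x ^ 2 := Real.sq_sqrt hpos.le
    set s := Real.sqrt (1 + x ^ 2) with hsdef
    rw [← hsq]
    field_simp
    ring
  have main : ∀ n : ℕ, (∀ x : ℝ, HasDerivAt (hkU n) (hkU (n + 1) x) x) ∧
      (∀ x : ℝ, HasDerivAt (hkU (n + 1)) (hkU (n + 2) x) x) := by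
    intro n
    induction n with
    | zero => exact ⟨base0, base1⟩
    | succ n ih =>
      obtain ⟨ih1, ih2⟩ := ih
      refine ⟨ih2, fun x => ?_⟩
      have hpos := one_add_sq_pos x
      have hN : HasDerivAt
          (fun x : ℝ => -(2 * (n : ℝ) + 3) * x * hkU (n + 1) x - ((n : ℝ) + 1) ^ 2 * hkU n x)
          (-(2 * (n : ℝ) + 3) * (1 * hkU (n + 1) x + x * hkU (n + 2) x)
            - ((n : ℝ) + 1) ^ 2 * hkU (n + 1) x) x := by
        have hA : HasDerivAt (fun x : ℝ => x * hkU (n + 1) x)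
            (1 * hkU (n + 1) x + x * hkU (n + 2) x) x := (hasDerivAt_id x).mul (ih2 x)
        have hA' := hA.const_mul (-(2 * (n : ℝ) + 3))
        have hB := (ih1 x).const_mul (((n : ℝ) + 1) ^ 2)
        have this : HasDerivAt (fun y : ℝ => -(2 * (n : ℝ) + 3) * (y * hkU (n + 1) y)
            - ((n : ℝ) + 1) ^ 2 * hkU n y) _ x := hA'.fun_sub hB
        convert this using 2 <;> funext <;> ring
      have hD : HasDerivAt (fun x : ℝ => 1 + x ^ 2) (2 * x) x := by
        simpa using ((hasDerivAt_pow 2 x).const_add 1)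
      have h6 : HasDerivAt (fun x : ℝ =>
          (-(2 * (n : ℝ) + 3) * x * hkU (n + 1) x - ((n : ℝ) + 1) ^ 2 * hkU n x) / (1 + x ^ 2)) _ x :=
        hN.fun_div hD hpos.ne'
      have heq : (fun x : ℝ =>
          (-(2 * (n : ℝ) + 3) * x * hkU (n + 1) x - ((n : ℝ) + 1) ^ 2 * hkU n x) / (1 + x ^ 2))
          = hkU (n + 2) := by funext y; rw [hkU_two]
      rw [heq] at h6
      convert h6 using 1
      have hrel : (1 + x ^ 2) * hkU (n + 2) x
          = -(2 * (n : ℝ) + 3) * x * hkU (n + 1) x - ((n : ℝ) + 1) ^ 2 * hkU n x := by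
        rw [hkU_two]; field_simp
      have h3 : hkU (n + 1 + 2) x = (-(2 * ((n:ℝ) + 1) + 3) * x * hkU (n + 2) x
          - (((n:ℝ) + 1) + 1) ^ 2 * hkU (n + 1) x) / (1 + x ^ 2) := by
        rw [hkU_two]; push_cast; ring_nf
      rw [h3, div_eq_div_iff hpos.ne' (pow_ne_zero 2 hpos.ne')]
      linear_combination (-(2*x)*(1 + x^2)) * hrel
  exact fun n => (main n).1

lemma hkU_zero : hkU 0 = fun x => (Real.sqrt (1 + x ^ 2))⁻¹ := rfl
lemma hkU_one : hkU 1 = fun x => -x * ((Real.sqrt (1 + x ^ 2))⁻¹) ^ 3 := rfl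

lemma abs_x_le (x : ℝ) : |x| ≤ Real.sqrt (1 + x ^ 2) := by
  rw [← Real.sqrt_sq_eq_abs]
  exact Real.sqrt_le_sqrt (by nlinarith)

lemma hkU_bound : ∀ n : ℕ, ∀ x : ℝ, |hkU n x| ≤ 2 ^ n * (Nat.factorial n : ℝ) := by
  have sqrt_ge_one : ∀ x : ℝ, (1:ℝ) ≤ Real.sqrt (1 + x ^ 2) := by
    intro x
    have := Real.sqrt_le_sqrt (show (1:ℝ) ≤ 1 + x ^ 2 by nlinarith)
    simpa using this
  have b0 : ∀ x : ℝ, |hkU 0 x| ≤ 2 ^ 0 * (Nat.factorial 0 : ℝ) := by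
    intro x
    rw [hkU_zero]
    simp only [abs_inv, abs_of_nonneg (Real.sqrt_nonneg _)]
    simpa using inv_le_one_of_one_le₀ (sqrt_ge_one x)
  have b1 : ∀ x : ℝ, |hkU 1 x| ≤ 2 ^ 1 * (Nat.factorial 1 : ℝ) := by
    intro x
    rw [hkU_one]
    have h1 := sqrt_ge_one x
    have h2 := abs_x_le x
    have hs : (0:ℝ) < Real.sqrt (1 + x ^ 2) := lt_of_lt_of_le one_pos h1
    have : |(-x) * ((Real.sqrt (1 + x ^ 2))⁻¹) ^ 3| = |x| / (Real.sqrt (1 + x ^ 2)) ^ 3 := by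
      rw [abs_mul, abs_neg, abs_pow, abs_inv, abs_of_nonneg hs.le]
      rw [div_eq_mul_inv, inv_pow]
    rw [this]
    have : |x| / (Real.sqrt (1 + x ^ 2)) ^ 3 ≤ 1 := by
      rw [div_le_one (by positivity)]
      calc |x| ≤ Real.sqrt (1 + x ^ 2) := h2
      _ ≤ Real.sqrt (1 + x ^ 2) ^ 3 := by nlinarith [h1, hs.le, mul_nonneg hs.le hs.le]
    simpa using this.trans (by norm_num)
  intro n
  induction n using Nat.strong_induction_on with
  | _ n ih =>
    match n with
    | 0 => exact b0
    | 1 => exact b1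
    | (m + 2) =>
      intro x
      have hm1 := ih (m + 1) (by omega) x
      have hm := ih m (by omega) x
      rw [hkU_two]
      have hpos := one_add_sq_pos x
      have hxb : |x| / (1 + x ^ 2) ≤ 1 / 2 := by
        rw [div_le_div_iff₀ hpos (by norm_num)]
        nlinarith [sq_abs x, sq_nonneg (|x| - 1)]
      have habs : |(-(2 * (m : ℝ) + 3) * x * hkU (m + 1) x - ((m : ℝ) + 1) ^ 2 * hkU m x) / (1 + x ^ 2)|
          ≤ ((2 * (m : ℝ) + 3) * |x| * |hkU (m + 1) x| + ((m : ℝ) + 1) ^ 2 * |hkU m x|) / (1 + x ^ 2) := by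
        rw [abs_div, abs_of_pos hpos]
        gcongr
        calc |(-(2 * (m : ℝ) + 3) * x * hkU (m + 1) x - ((m : ℝ) + 1) ^ 2 * hkU m x)|
            ≤ |(-(2 * (m : ℝ) + 3) * x * hkU (m + 1) x)| + |((m : ℝ) + 1) ^ 2 * hkU m x| := abs_sub _ _
          _ = (2 * (m : ℝ) + 3) * |x| * |hkU (m + 1) x| + ((m : ℝ) + 1) ^ 2 * |hkU m x| := by
              rw [abs_mul, abs_mul, abs_mul, abs_neg, abs_of_pos (by positivity : (0:ℝ) < 2 * (m:ℝ) + 3),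
                abs_pow, sq_abs]
      refine habs.trans ?_
      rw [div_le_iff₀ hpos]
      have e1 : (Nat.factorial (m + 2) : ℝ) = ((m:ℝ) + 2) * ((m:ℝ) + 1) * (Nat.factorial m : ℝ) := by
        rw [Nat.factorial_succ, Nat.factorial_succ]; push_cast; ring
      have e2 : (Nat.factorial (m + 1) : ℝ) = ((m:ℝ) + 1) * (Nat.factorial m : ℝ) := by
        rw [Nat.factorial_succ]; push_cast; ring
      have hfm : (0:ℝ) ≤ (Nat.factorial m : ℝ) := by positivity
      -- (2m+3)|x||U(m+1)| + (m+1)²|Um| ≤ 2^{m+2}(m+2)! (1+x²)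
      have t1 : (2 * (m : ℝ) + 3) * |x| * |hkU (m + 1) x|
          ≤ (2 * (m : ℝ) + 3) * ((1 + x^2)/2) * (2 ^ (m+1) * (Nat.factorial (m+1) : ℝ)) := by
        have hx2 : |x| ≤ (1 + x ^ 2) / 2 := by
          nlinarith [sq_abs x, sq_nonneg (|x| - 1)]
        have := mul_le_mul (mul_le_mul_of_nonneg_left hx2 (by positivity : (0:ℝ) ≤ 2*(m:ℝ)+3)) hm1
          (abs_nonneg _) (by positivity)
        simpa [mul_assoc] using this
      have t2 : ((m : ℝ) + 1) ^ 2 * |hkU m x| ≤ ((m : ℝ) + 1) ^ 2 * (2 ^ m * (Nat.factorial m : ℝ)) :=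
        mul_le_mul_of_nonneg_left hm (by positivity)
      have key : (2 * (m : ℝ) + 3) * ((1 + x^2)/2) * (2 ^ (m+1) * (Nat.factorial (m+1) : ℝ))
          + ((m : ℝ) + 1) ^ 2 * (2 ^ m * (Nat.factorial m : ℝ))
          ≤ 2 ^ (m + 2) * (Nat.factorial (m + 2) : ℝ) * (1 + x ^ 2) := by
        rw [e1, e2]
        have h2m : (0:ℝ) < 2 ^ m := by positivity
        have hx1 : (1:ℝ) ≤ 1 + x ^ 2 := by nlinarith
        have expand : (2:ℝ) ^ (m+1) = 2 * 2 ^ m := by ring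
        have expand2 : (2:ℝ) ^ (m+2) = 4 * 2 ^ m := by ring
        rw [expand, expand2]
        nlinarith [mul_pos h2m (lt_of_lt_of_le one_pos (le_of_eq rfl) : (0:ℝ) < 1),
          mul_nonneg h2m.le hfm, mul_nonneg (mul_nonneg h2m.le hfm) (sq_nonneg x),
          mul_nonneg (mul_nonneg (mul_nonneg h2m.le hfm) (sq_nonneg x)) (Nat.cast_nonneg m : (0:ℝ) ≤ m)]
      calc (2 * (m : ℝ) + 3) * |x| * |hkU (m + 1) x| + ((m : ℝ) + 1) ^ 2 * |hkU m x|
          ≤ (2 * (m : ℝ) + 3) * ((1 + x^2)/2) * (2 ^ (m+1) * (Nat.factorial (m+1) : ℝ))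
            + ((m : ℝ) + 1) ^ 2 * (2 ^ m * (Nat.factorial m : ℝ)) := add_le_add t1 t2
        _ ≤ _ := key
lemma fhk_hasDerivAt (g L x : ℝ) : HasDerivAt (fhk g L) (1 - g * hkU 0 x) x := by
  rw [hkU_zero]
  have h := (Real.hasDerivAt_arsinh x).const_mul g
  exact ((hasDerivAt_id x).fun_sub h).sub_const L

lemma fhk_deriv (g L x : ℝ) : deriv (fhk g L) x = 1 - g * hkU 0 x :=
  (fhk_hasDerivAt g L x).deriv

lemma fhk_iteratedDeriv (g L : ℝ) :
    ∀ k : ℕ, iteratedDeriv (k + 2) (fhk g L) = fun x => -(g * hkU (k + 1) x) := by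
  have h1 : iteratedDeriv 1 (fhk g L) = fun x => 1 - g * hkU 0 x := by
    funext x; rw [iteratedDeriv_one]; exact fhk_deriv g L x
  intro k
  induction k with
  | zero =>
    rw [iteratedDeriv_succ, h1]
    funext x
    exact (((hkU_deriv 0 x).const_mul g).const_sub 1).deriv.trans (by ring)
  | succ k ih =>
    rw [iteratedDeriv_succ, ih]
    funext x
    exact (((hkU_deriv (k + 1) x).const_mul g).neg).deriv.trans (by ring)

lemma gamma_le (g L z : ℝ) (hD : 0 < 1 - g * hkU 0 z) :
    gammaFn (fhk g L) z ≤ 2 * max 1 (|g| / (2 * (1 - g * hkU 0 z))) := by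
  set D := 1 - g * hkU 0 z with hDdef
  set c := |g| / (2 * D) with hcdef
  have hc0 : 0 ≤ c := by positivity
  have hM0 : (0:ℝ) ≤ 2 * max 1 c := by positivity
  apply Real.sSup_le _ hM0
  rintro y ⟨k, hk2, rfl⟩
  obtain ⟨m, rfl⟩ : ∃ m, k = m + 2 := ⟨k - 2, by omega⟩
  rw [fhk_iteratedDeriv, fhk_deriv]
  have hfact : (0:ℝ) < (Nat.factorial (m + 2) : ℝ) := by positivity
  -- bound on the base
  have hbase : |(-(g * hkU (m + 1) z)) / ((Nat.factorial (m + 2) : ℝ) * D)| ≤ 2 ^ (m + 1) * c := by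
    rw [abs_div, abs_neg, abs_mul, abs_mul, abs_of_pos hfact, abs_of_pos hD]
    rw [div_le_iff₀ (by positivity)]
    have h1 : |hkU (m + 1) z| ≤ 2 ^ (m + 1) * (Nat.factorial (m + 1) : ℝ) := hkU_bound _ _
    have h2 : (2:ℝ) * (Nat.factorial (m + 1) : ℝ) ≤ (Nat.factorial (m + 2) : ℝ) := by
      rw [Nat.factorial_succ (m + 1)]
      push_cast
      nlinarith [(by positivity : (0:ℝ) ≤ ((m+1).factorial : ℝ)), (Nat.cast_nonneg m : (0:ℝ) ≤ (m:ℝ))]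
    calc |g| * |hkU (m + 1) z| ≤ |g| * (2 ^ (m + 1) * (Nat.factorial (m + 1) : ℝ)) :=
          mul_le_mul_of_nonneg_left h1 (abs_nonneg g)
      _ ≤ 2 ^ (m + 1) * c * ((Nat.factorial (m + 2) : ℝ) * D) := by
          rw [hcdef]
          have hD' : (0:ℝ) < D := hD
          rw [show (2:ℝ) ^ (m+1) * (|g| / (2 * D)) * ((Nat.factorial (m + 2) : ℝ) * D)
            = 2 ^ (m+1) * |g| * ((Nat.factorial (m + 2) : ℝ) / 2) by field_simp]
          have : (Nat.factorial (m + 1) : ℝ) ≤ (Nat.factorial (m + 2) : ℝ) / 2 := by linarith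
          nlinarith [mul_le_mul_of_nonneg_left this
            (mul_nonneg (by positivity : (0:ℝ) ≤ (2:ℝ)^(m+1)) (abs_nonneg g))]
  -- exponent
  have hexp : ((m + 2 : ℕ) : ℝ) - 1 = (m : ℝ) + 1 := by push_cast; ring
  rw [hexp]
  have hm1 : (0:ℝ) < (m : ℝ) + 1 := by positivity
  have hrpow : |(-(g * hkU (m + 1) z)) / ((Nat.factorial (m + 2) : ℝ) * D)| ^ ((1:ℝ) / ((m:ℝ) + 1))
      ≤ (2 ^ (m + 1) * c) ^ ((1:ℝ) / ((m:ℝ) + 1)) :=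
    Real.rpow_le_rpow (abs_nonneg _) hbase (by positivity)
  refine hrpow.trans ?_
  have heq : ((2:ℝ) ^ (m + 1) * c) ^ ((1:ℝ) / ((m:ℝ) + 1)) = 2 * c ^ ((1:ℝ) / ((m:ℝ) + 1)) := by
    rw [Real.mul_rpow (by positivity) hc0]
    congr 1
    rw [← Real.rpow_natCast 2 (m + 1), ← Real.rpow_mul (by norm_num)]
    push_cast
    rw [mul_one_div, div_self hm1.ne', Real.rpow_one]
  rw [heq]
  have : c ^ ((1:ℝ) / ((m:ℝ) + 1)) ≤ max 1 c := by
    rcases le_total c 1 with h | h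
    · exact le_max_of_le_left (Real.rpow_le_one hc0 h (by positivity))
    · refine le_max_of_le_right ?_
      calc c ^ ((1:ℝ) / ((m:ℝ) + 1)) ≤ c ^ (1:ℝ) :=
            Real.rpow_le_rpow_of_exponent_le h (by rw [div_le_one hm1]; linarith)
        _ = c := Real.rpow_one c
  linarith
lemma sqrt_two_lt : Real.sqrt 2 < 3 / 2 := by
  nlinarith [Real.sq_sqrt (by norm_num : (0:ℝ) ≤ 2), Real.sqrt_nonneg 2]

lemma alpha0_pos : 0 < alpha0 := by
  have := sqrt_two_lt
  unfold alpha0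
  linarith

lemma approx_of (g L z : ℝ) (hD : 0 < 1 - g * hkU 0 z)
    (hsmall : |fhk g L z| * (2 * max 1 (|g| / (2 * (1 - g * hkU 0 z)))) <
      alpha0 * (1 - g * hkU 0 z)) :
    ApproxZero (fhk g L) z := by
  set D := 1 - g * hkU 0 z with hDdef
  set M := 2 * max 1 (|g| / (2 * D)) with hMdef
  have hbeta : betaFn (fhk g L) z = |fhk g L z| / D := by
    rw [betaFn, fhk_deriv, ← hDdef, abs_div, abs_of_pos hD]
  have hM0 : (0:ℝ) ≤ M := by positivity
  have h1 : alphaFn (fhk g L) z ≤ betaFn (fhk g L) z * M :=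
    mul_le_mul_of_nonneg_left (gamma_le g L z hD) (abs_nonneg _)
  refine lt_of_le_of_lt h1 ?_
  rw [hbeta, div_mul_eq_mul_div, div_lt_iff₀ hD]
  exact hsmall

lemma fhk_cont (g L : ℝ) : Continuous (fhk g L) := by
  unfold fhk
  exact (continuous_id.sub (continuous_const.mul Real.continuous_arsinh)).sub continuous_const

lemma fhk_root (g L : ℝ) (hg1 : g ≤ 1) (hL : 0 ≤ L) :
    ∃ z, 0 ≤ z ∧ fhk g L z = 0 := by
  set S0 := Real.exp (L + 2) with hS0
  have hS0pos : 0 < S0 := Real.exp_pos _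
  have hS01 : 1 ≤ S0 := Real.one_le_exp (by linarith)
  have harsinh_le : Real.arsinh S0 ≤ L + 4 := by
    have hsq : Real.sqrt (1 + S0 ^ 2) ≤ 1 + S0 := by
      rw [show (1:ℝ) + S0 = Real.sqrt ((1 + S0)^2) from (Real.sqrt_sq (by positivity)).symm]
      exact Real.sqrt_le_sqrt (by nlinarith)
    have h1 : Real.arsinh S0 ≤ Real.log (3 * S0) := by
      rw [Real.arsinh]
      apply Real.log_le_log (by positivity)
      linarith
    have h2 : Real.log (3 * S0) = Real.log 3 + (L + 2) := by
      rw [Real.log_mul (by norm_num) hS0pos.ne', hS0, Real.log_exp]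
    have h3 : Real.log 3 ≤ 2 := by
      have := Real.log_le_sub_one_of_pos (by norm_num : (0:ℝ) < 3)
      linarith
    linarith
  have harsinh_nonneg : 0 ≤ Real.arsinh S0 := Real.arsinh_nonneg_iff.mpr hS0pos.le
  have hexp_big : 2 * L + 4 ≤ S0 := by
    have h1 : Real.exp (L / 2 + 1) ≥ L / 2 + 2 := by
      have := Real.add_one_le_exp (L / 2 + 1)
      linarith
    have h2 : S0 = Real.exp (L / 2 + 1) * Real.exp (L / 2 + 1) := by
      rw [hS0, ← Real.exp_add]; ring_nf
    have h3 : (0:ℝ) ≤ L / 2 + 2 := by linarith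
    nlinarith [Real.exp_pos (L / 2 + 1)]
  have hfS0 : 0 ≤ fhk g L S0 := by
    have : g * Real.arsinh S0 ≤ Real.arsinh S0 := by
      nlinarith
    show 0 ≤ S0 - g * Real.arsinh S0 - L
    linarith
  have hf0 : fhk g L 0 ≤ 0 := by
    show 0 - g * Real.arsinh 0 - L ≤ 0
    rw [Real.arsinh_zero]; linarith
  have := intermediate_value_Icc hS0pos.le ((fhk_cont g L).continuousOn)
  have h0mem : (0:ℝ) ∈ Set.Icc (fhk g L 0) (fhk g L S0) := ⟨hf0, hfS0⟩
  obtain ⟨z, hz, hz0⟩ := this h0mem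
  exact ⟨z, hz.1, hz0⟩

lemma D_pos (g z : ℝ) (hg0 : 0 ≤ g) (hg1 : g ≤ 1) (h : g < 1 ∨ z ≠ 0) :
    0 < 1 - g * hkU 0 z := by
  rw [hkU_zero]
  have hs1 : (1:ℝ) ≤ Real.sqrt (1 + z ^ 2) := by
    have := Real.sqrt_le_sqrt (show (1:ℝ) ≤ 1 + z ^ 2 by nlinarith)
    simpa using this
  have hspos : (0:ℝ) < Real.sqrt (1 + z ^ 2) := lt_of_lt_of_le one_pos hs1
  have hinv1 : (Real.sqrt (1 + z ^ 2))⁻¹ ≤ 1 := inv_le_one_of_one_le₀ hs1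
  have hinvpos : (0:ℝ) < (Real.sqrt (1 + z ^ 2))⁻¹ := by positivity
  rcases h with h | h
  · nlinarith
  · have hz2 : (1:ℝ) < 1 + z ^ 2 := by
      have : z ^ 2 > 0 := by positivity
      linarith
    have hs1' : (1:ℝ) < Real.sqrt (1 + z ^ 2) := by
      nlinarith [Real.sq_sqrt (by positivity : (0:ℝ) ≤ 1 + z ^ 2)]
    have hinv1' : (Real.sqrt (1 + z ^ 2))⁻¹ < 1 := by
      rw [inv_lt_one_iff₀]; right; exact hs1'
    nlinarith
lemma key_nbhd (g0 L0 : ℝ) (hg0 : 0 ≤ g0) (hg1 : g0 ≤ 1) (hL0 : 0 ≤ L0)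
    (hgood : g0 < 1 ∨ 0 < L0) :
    ∃ z : ℝ, ∃ V : Set (ℝ × ℝ), V ∈ nhds (g0, L0) ∧
      ∀ p ∈ V, ApproxZero (fhk p.1 p.2) z := by
  obtain ⟨z0, hz0nn, hz0⟩ := fhk_root g0 L0 hg1 hL0
  have hcase : g0 < 1 ∨ z0 ≠ 0 := by
    rcases hgood with h | h
    · exact Or.inl h
    · right
      intro hz
      rw [hz] at hz0
      have : (0:ℝ) - g0 * Real.arsinh 0 - L0 = 0 := hz0
      rw [Real.arsinh_zero] at this
      linarith
  have hD0 : 0 < 1 - g0 * hkU 0 z0 := D_pos g0 z0 hg0 hg1 hcase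
  set c := hkU 0 z0 with hc
  set D0 := 1 - g0 * c with hD0def
  set M0 := 2 * max 1 ((|g0| + 1) / D0) with hM0def
  have hM0pos : 0 < M0 := by positivity
  set δ := alpha0 * (D0 / 2) / M0 with hδdef
  have hδpos : 0 < δ := by
    have := alpha0_pos
    positivity
  set A := Real.arsinh z0 with hA
  refine ⟨z0, {p : ℝ × ℝ | D0 / 2 < 1 - p.1 * c ∧ |p.1| < |g0| + 1 ∧ |z0 - p.1 * A - p.2| < δ}, ?_, ?_⟩
  · have hopen : IsOpen {p : ℝ × ℝ | D0 / 2 < 1 - p.1 * c ∧ |p.1| < |g0| + 1 ∧ |z0 - p.1 * A - p.2| < δ} := by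
      apply IsOpen.inter
      · exact isOpen_lt continuous_const (continuous_const.sub (continuous_fst.mul continuous_const))
      apply IsOpen.inter
      · exact isOpen_lt (continuous_fst.abs) continuous_const
      · exact isOpen_lt ((continuous_const.sub (continuous_fst.mul continuous_const)).sub
          continuous_snd).abs continuous_const
    refine hopen.mem_nhds ?_
    refine ⟨by simpa using by linarith, by simp, ?_⟩
    have : z0 - g0 * A - L0 = 0 := hz0
    simp only [Set.mem_setOf_eq, this]
    simpa using hδpos
  · rintro ⟨g, L⟩ ⟨h1, h2, h3⟩
    simp only [Set.mem_setOf_eq] at h1 h2 h3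
    have hDp : 0 < 1 - g * c := lt_trans (by positivity) h1
    apply approx_of g L z0 hDp
    have hfval : fhk g L z0 = z0 - g * A - L := rfl
    have hMp_le : 2 * max 1 (|g| / (2 * (1 - g * c))) ≤ M0 := by
      rw [hM0def]
      have : |g| / (2 * (1 - g * c)) ≤ (|g0| + 1) / D0 := by
        apply div_le_div₀ (by positivity) h2.le (by positivity)
        linarith
      gcongr
    have hMp_pos : 0 < 2 * max 1 (|g| / (2 * (1 - g * c))) := by positivity
    calc |fhk g L z0| * (2 * max 1 (|g| / (2 * (1 - g * c))))
        ≤ |fhk g L z0| * M0 := mul_le_mul_of_nonneg_left hMp_le (abs_nonneg _)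
      _ < δ * M0 := by
          apply mul_lt_mul_of_pos_right _ hM0pos
          rw [hfval]; exact h3
      _ = alpha0 * (D0 / 2) := by
          rw [hδdef]; field_simp
      _ ≤ alpha0 * (1 - g * c) := by
          have := alpha0_pos
          nlinarith

/-- Theorem 1.4: for any `0 < ε < 1/4` and `L_max > ε' = √3·α₀·ε^{3/2}/(1-ε)^{1/2}`,
there is a piecewise constant (finitely-valued) function `S̃` on
`R = (0,1)×[0,L_max] \ (1-ε,1)×[0,ε']` that is an approximate zero of `f_{g,L}`. -/
theorem piecewise_constant_starter (ε Lmax : ℝ) (hε0 : 0 < ε) (hε : ε < 1 / 4)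
    (hL : Lmax > Real.sqrt 3 * alpha0 * ε ^ ((3 : ℝ) / 2) / (1 - ε) ^ ((1 : ℝ) / 2)) :
    ∃ S : ℝ × ℝ → ℝ,
      (S '' ((Set.Ioo (0 : ℝ) 1 ×ˢ Set.Icc (0 : ℝ) Lmax) \
        (Set.Ioo (1 - ε) 1 ×ˢ
          Set.Icc (0 : ℝ) (Real.sqrt 3 * alpha0 * ε ^ ((3 : ℝ) / 2) / (1 - ε) ^ ((1 : ℝ) / 2))))).Finite ∧
      ∀ p ∈ (Set.Ioo (0 : ℝ) 1 ×ˢ Set.Icc (0 : ℝ) Lmax) \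
        (Set.Ioo (1 - ε) 1 ×ˢ
          Set.Icc (0 : ℝ) (Real.sqrt 3 * alpha0 * ε ^ ((3 : ℝ) / 2) / (1 - ε) ^ ((1 : ℝ) / 2))),
        ApproxZero (fhk p.1 p.2) (S p) := by
  classical
  set ε' := Real.sqrt 3 * alpha0 * ε ^ ((3 : ℝ) / 2) / (1 - ε) ^ ((1 : ℝ) / 2) with hε'def
  have hε'pos : 0 < ε' := by
    have h3 : (0:ℝ) < Real.sqrt 3 := Real.sqrt_pos.mpr (by norm_num)
    have h1 : (0:ℝ) < ε ^ ((3:ℝ)/2) := Real.rpow_pos_of_pos hε0 _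
    have h2 : (0:ℝ) < (1 - ε) ^ ((1:ℝ)/2) := Real.rpow_pos_of_pos (by linarith) _
    have := alpha0_pos
    positivity
  set R := (Set.Ioo (0 : ℝ) 1 ×ˢ Set.Icc (0 : ℝ) Lmax) \
      (Set.Ioo (1 - ε) 1 ×ˢ Set.Icc (0 : ℝ) ε') with hRdef
  set K := (Set.Icc (0:ℝ) 1 ×ˢ Set.Icc (0:ℝ) Lmax) \
      (Set.Ioi (1 - ε) ×ˢ Set.Iio ε') with hKdef
  have hRK : R ⊆ K := by
    rintro ⟨g, L⟩ ⟨⟨⟨hg0, hg1⟩, hL0, hL1⟩, hnot⟩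
    refine ⟨⟨⟨hg0.le, hg1.le⟩, hL0, hL1⟩, ?_⟩
    rintro ⟨hgi, hLi⟩
    exact hnot ⟨⟨hgi, hg1⟩, hL0, hLi.le⟩
  have hKcomp : IsCompact K :=
    (isCompact_Icc.prod isCompact_Icc).diff (isOpen_Ioi.prod isOpen_Iio)
  have key : ∀ p ∈ K, ∃ z : ℝ, ∃ V : Set (ℝ × ℝ), V ∈ nhds p ∧
      ∀ q ∈ V, ApproxZero (fhk q.1 q.2) z := by
    rintro ⟨g, L⟩ ⟨⟨⟨hg0, hg1⟩, hL0, hL1⟩, hnot⟩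
    have hgood : g < 1 ∨ 0 < L := by
      by_contra h
      push_neg at h
      obtain ⟨h1, h2⟩ := h
      have hg_eq : g = 1 := le_antisymm hg1 h1
      have hL_eq : L = 0 := le_antisymm h2 hL0
      exact hnot ⟨Set.mem_Ioi.mpr (show 1 - ε < g by linarith),
        Set.mem_Iio.mpr (show L < ε' by linarith)⟩
    exact key_nbhd g L hg0 hg1 hL0 hgood
  choose! z V hV hP using key
  obtain ⟨t, htK, htcov⟩ := hKcomp.elim_nhds_subcover V (fun p hp => hV p hp)
  refine ⟨fun p => if h : ∃ x ∈ t, p ∈ V x then z h.choose else 0, ?_, ?_⟩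
  · apply Set.Finite.subset (((t.finite_toSet).image z).insert 0)
    rintro y ⟨p, hp, rfl⟩
    dsimp only
    by_cases h : ∃ x ∈ t, p ∈ V x
    · rw [dif_pos h]
      exact Set.mem_insert_of_mem _ ⟨h.choose, h.choose_spec.1, rfl⟩
    · rw [dif_neg h]
      exact Set.mem_insert _ _
  · intro p hp
    have hpK : p ∈ K := hRK hp
    have hcov := htcov hpK
    rw [Set.mem_iUnion₂] at hcov
    obtain ⟨x, hxt, hpx⟩ := hcov
    have h : ∃ x ∈ t, p ∈ V x := ⟨x, hxt, hpx⟩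
    dsimp only
    rw [dif_pos h]
    exact hP h.choose (htK _ h.choose_spec.1) p h.choose_spec.2
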